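/- Let k : ℕ and let H ∈ Matrix (Fin (k+2)) (Fin (k+2)) ℂ be Hermitian, and let H' be the k×k principal submatrix of H obtained by deleting the last two rows and columns (H' is also Hermitian). Assume det H ≠ 0 and det H' ≠ 0. Then det H and det H' are real numbers, and: if det H and det H' have opposite signs then sig(H) = sig(H'); if det H and det H' have the same sign then sig(H) = sig(H') + 2 or sig(H) = sig(H') − 2. -/

import Mathlib

open Matrix Finset

/-- The signature of a Hermitian complex matrix: the number of positive eigenvalues
minus the number of negative eigenvalues (and `0` for non-Hermitian matrices). -/
noncomputable def matSig {n : ℕ} (H : Matrix (Fin n) (Fin n) ℂ) : ℤ := by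
  classical
  exact if h : H.IsHermitian then
    ((Finset.univ.filter fun i => 0 < h.eigenvalues i).card : ℤ) -
    ((Finset.univ.filter fun i => h.eigenvalues i < 0).card : ℤ)
  else 0

namespace Stmt10Aux

noncomputable def Vspan {n : ℕ} (e : OrthonormalBasis (Fin n) ℂ (EuclideanSpace ℂ (Fin n)))
    (S : Finset (Fin n)) : Submodule ℂ (EuclideanSpace ℂ (Fin n)) :=
  Submodule.span ℂ (Set.range fun i : {i // i ∈ S} => e i)

theorem finrank_Vspan {n : ℕ} (e : OrthonormalBasis (Fin n) ℂ (EuclideanSpace ℂ (Fin n)))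
    (S : Finset (Fin n)) :
    Module.finrank ℂ (Vspan e S) = S.card := by
  rw [Vspan]
  have h := finrank_span_eq_card
    ((e.orthonormal.comp (Subtype.val : {i // i ∈ S} → Fin n)
      Subtype.val_injective).linearIndependent)
  rw [show (Set.range fun i : {i // i ∈ S} => e i)
      = Set.range (⇑e ∘ (Subtype.val : {i // i ∈ S} → Fin n)) from rfl, h, Fintype.card_coe]

theorem repr_eq_zero_of_mem_Vspan {n : ℕ}
    (e : OrthonormalBasis (Fin n) ℂ (EuclideanSpace ℂ (Fin n))) {S : Finset (Fin n)}
    {x : EuclideanSpace ℂ (Fin n)}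
    (hx : x ∈ Vspan e S) {i : Fin n} (hi : i ∉ S) : e.repr x i = 0 := by
  rw [e.repr_apply_apply]
  induction hx using Submodule.span_induction with
  | mem y hy =>
    obtain ⟨⟨j, hj⟩, rfl⟩ := hy
    exact e.orthonormal.2 (fun h => hi (h ▸ hj))
  | zero => simp
  | add y z _ _ hy hz => rw [inner_add_right, hy, hz, add_zero]
  | smul a y _ hy => rw [inner_smul_right, hy, mul_zero]

theorem norm_sq_repr_pos {n : ℕ} (e : OrthonormalBasis (Fin n) ℂ (EuclideanSpace ℂ (Fin n)))
    {x : EuclideanSpace ℂ (Fin n)} (hx : x ≠ 0) :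
    ∃ i, 0 < ‖e.repr x i‖ ^ 2 := by
  by_contra h
  push_neg at h
  apply hx
  have h4 : ∀ i, e.repr x i = 0 := fun i => by
    have := h i
    have h2 : (0:ℝ) ≤ ‖e.repr x i‖ ^ 2 := sq_nonneg _
    have : ‖e.repr x i‖ = 0 := by nlinarith
    exact norm_eq_zero.mp this
  have : e.repr x = 0 := by ext i; exact h4 i
  simpa using congrArg e.repr.symm this

theorem form_formula {n : ℕ} {A : Matrix (Fin n) (Fin n) ℂ} (hA : A.IsHermitian)
    (x : EuclideanSpace ℂ (Fin n)) :
    dotProduct (star ⇑x) (A *ᵥ ⇑x)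
      = ((∑ i, hA.eigenvalues i * ‖hA.eigenvectorBasis.repr x i‖ ^ 2 : ℝ) : ℂ) := by
  set e := hA.eigenvectorBasis with he
  set c : Fin n → ℂ := ⇑(e.repr x) with hc
  have hx : ⇑x = ∑ i, c i • ⇑(e i) := by
    conv_lhs => rw [← e.sum_repr x]
    rw [WithLp.ofLp_sum]; simp only [WithLp.ofLp_smul]; rfl
  have hAx : A *ᵥ ⇑x = ∑ i, (c i * (hA.eigenvalues i : ℂ)) • ⇑(e i) := by
    rw [hx, show (A *ᵥ ∑ i, c i • ⇑(e i)) = A.mulVecLin (∑ i, c i • ⇑(e i)) from rfl,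
      map_sum]
    refine Finset.sum_congr rfl fun i _ => ?_
    rw [_root_.map_smul, mulVecLin_apply, hA.mulVec_eigenvectorBasis]
    funext a
    simp [Complex.real_smul]
    ring
  set y : EuclideanSpace ℂ (Fin n) := ∑ i, (c i * (hA.eigenvalues i : ℂ)) • e i with hy
  have hycoe : A *ᵥ ⇑x = ⇑y := by rw [hAx, hy, WithLp.ofLp_sum]; simp only [WithLp.ofLp_smul]
  rw [hycoe, dotProduct_comm, ← EuclideanSpace.inner_eq_star_dotProduct, hy]
  rw [inner_sum]
  push_cast
  refine Finset.sum_congr rfl fun j _ => ?_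
  have hcj : (inner ℂ (e j) x : ℂ) = c j := by rw [← e.repr_apply_apply]
  rw [inner_smul_right, ← inner_conj_symm, hcj]
  have h2 : c j * (starRingEnd ℂ) (c j) = ((‖c j‖ : ℂ)) ^ 2 := Complex.mul_conj' (c j)
  have h3 : (‖c j‖ : ℂ) = (‖e.repr x j‖ : ℂ) := rfl
  calc c j * (hA.eigenvalues j : ℂ) * (starRingEnd ℂ) (c j)
      = (hA.eigenvalues j : ℂ) * (c j * (starRingEnd ℂ) (c j)) := by ring
    _ = _ := by rw [h2, h3]

section Counting

variable {n : ℕ} {A : Matrix (Fin n) (Fin n) ℂ} (hA : A.IsHermitian)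

open Classical in
noncomputable def negC : ℕ := (univ.filter fun i => hA.eigenvalues i < 0).card
open Classical in
noncomputable def posC : ℕ := (univ.filter fun i => 0 < hA.eigenvalues i).card

theorem eigenvalues_ne_zero (hdet : A.det ≠ 0) (i : Fin n) : hA.eigenvalues i ≠ 0 := by
  intro hi
  apply hdet
  rw [hA.det_eq_prod_eigenvalues]
  exact Finset.prod_eq_zero (mem_univ i) (by rw [hi]; norm_num)

open Classical in
theorem pos_add_neg (hdet : A.det ≠ 0) : posC hA + negC hA = n := by
  have hnz := eigenvalues_ne_zero hA hdet
  rw [posC, negC]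
  rw [← Finset.card_union_of_disjoint]
  · rw [show ((univ.filter fun i => 0 < hA.eigenvalues i)
        ∪ (univ.filter fun i => hA.eigenvalues i < 0)) = univ from ?_, card_univ,
        Fintype.card_fin]
    ext i
    simp only [mem_union, mem_filter, mem_univ, true_and, iff_true]
    rcases lt_trichotomy (hA.eigenvalues i) 0 with h | h | h
    · exact Or.inr h
    · exact absurd h (hnz i)
    · exact Or.inl h
  · rw [Finset.disjoint_filter]
    intro i _ h1 h2
    exact absurd (h1.trans h2) (lt_irrefl _)

open Classical in
/-- A subspace on which the Hermitian form is negative definite has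
dimension at most the number of negative eigenvalues. -/
theorem negdef_finrank_le (hdet : A.det ≠ 0) (W : Submodule ℂ (EuclideanSpace ℂ (Fin n)))
    (hW : ∀ x ∈ W, x ≠ 0 → (dotProduct (star ⇑x) (A *ᵥ ⇑x)).re < 0) :
    Module.finrank ℂ W ≤ negC hA := by
  set Spos := (univ.filter fun i => 0 < hA.eigenvalues i) with hSpos
  have hdisj : W ⊓ Vspan hA.eigenvectorBasis Spos = ⊥ := by
    rw [Submodule.eq_bot_iff]
    intro x ⟨hxW, hxV⟩
    by_contra hx0
    have hlt := hW x hxW hx0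
    have hge : 0 ≤ (dotProduct (star ⇑x) (A *ᵥ ⇑x)).re := by
      rw [form_formula hA x, Complex.ofReal_re]
      apply Finset.sum_nonneg
      intro i _
      by_cases hi : i ∈ Spos
      · rw [hSpos, mem_filter] at hi
        exact mul_nonneg hi.2.le (sq_nonneg _)
      · rw [repr_eq_zero_of_mem_Vspan hA.eigenvectorBasis hxV hi]
        simp
    linarith
  have hdim := Submodule.finrank_sup_add_finrank_inf_eq W (Vspan hA.eigenvectorBasis Spos)
  rw [hdisj] at hdim
  have h1 : Module.finrank ℂ (W ⊔ Vspan hA.eigenvectorBasis Spos : Submodule ℂ _) ≤ n := by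
    have := Submodule.finrank_le (W ⊔ Vspan hA.eigenvectorBasis Spos)
    simpa using this
  rw [finrank_Vspan] at hdim
  have h2 := pos_add_neg hA hdet
  simp [finrank_bot] at hdim
  have h3 : Spos.card = posC hA := rfl
  omega

open Classical in
theorem Vspan_neg_negdef (x : EuclideanSpace ℂ (Fin n))
    (hx : x ∈ Vspan hA.eigenvectorBasis (univ.filter fun i => hA.eigenvalues i < 0))
    (hx0 : x ≠ 0) : (dotProduct (star ⇑x) (A *ᵥ ⇑x)).re < 0 := by
  rw [form_formula hA x, Complex.ofReal_re]
  obtain ⟨i0, hi0⟩ := norm_sq_repr_pos hA.eigenvectorBasis hx0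
  have hi0neg : hA.eigenvalues i0 < 0 := by
    by_contra h
    have : i0 ∉ (univ.filter fun i => hA.eigenvalues i < 0) := by simp [h]
    rw [repr_eq_zero_of_mem_Vspan hA.eigenvectorBasis hx this] at hi0
    simp at hi0
  have : ∑ i, hA.eigenvalues i * ‖hA.eigenvectorBasis.repr x i‖ ^ 2 < ∑ i : Fin n, (0:ℝ) := by
    apply Finset.sum_lt_sum
    · intro i _
      by_cases hi : i ∈ (univ.filter fun i => hA.eigenvalues i < 0)
      · rw [mem_filter] at hi
        have := sq_nonneg ‖hA.eigenvectorBasis.repr x i‖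
        nlinarith [hi.2]
      · rw [repr_eq_zero_of_mem_Vspan hA.eigenvectorBasis hx hi]; simp
    · exact ⟨i0, mem_univ i0, by nlinarith⟩
  simpa using this

open Classical in
theorem det_sign (hdet : A.det ≠ 0) :
    A.det.im = 0 ∧ 0 < (-1 : ℝ) ^ (negC hA) * A.det.re := by
  have hdetr : A.det = ((∏ i, hA.eigenvalues i : ℝ) : ℂ) := by
    rw [hA.det_eq_prod_eigenvalues]; push_cast; rfl
  have hnz := eigenvalues_ne_zero hA hdet
  refine ⟨by rw [hdetr, Complex.ofReal_im], ?_⟩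
  have hre : A.det.re = ∏ i, hA.eigenvalues i := by rw [hdetr, Complex.ofReal_re]
  rw [hre]
  rw [← Finset.prod_filter_mul_prod_filter_not univ (fun i => hA.eigenvalues i < 0)]
  set s := univ.filter fun i => hA.eigenvalues i < 0 with hs
  have hposrest : 0 < ∏ i ∈ univ.filter (fun i => ¬ hA.eigenvalues i < 0), hA.eigenvalues i := by
    apply Finset.prod_pos
    intro i hi
    rw [mem_filter] at hi
    exact lt_of_le_of_ne (not_lt.mp hi.2) (Ne.symm (hnz i))
  have hnegprod : 0 < ∏ i ∈ s, (-hA.eigenvalues i) := by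
    apply Finset.prod_pos
    intro i hi
    rw [hs, mem_filter] at hi
    linarith [hi.2]
  have hkey : ∏ i ∈ s, (-hA.eigenvalues i) = (-1 : ℝ) ^ s.card * ∏ i ∈ s, hA.eigenvalues i := by
    rw [show (fun i => -hA.eigenvalues i) = fun i => (-1 : ℝ) * hA.eigenvalues i by
        funext i; ring, Finset.prod_mul_distrib, Finset.prod_const]
  have hcard : s.card = negC hA := rfl
  rw [hkey, hcard] at hnegprod
  calc (0:ℝ) < ((-1:ℝ) ^ negC hA * ∏ i ∈ s, hA.eigenvalues i)
        * ∏ i ∈ univ.filter (fun i => ¬ hA.eigenvalues i < 0), hA.eigenvalues i :=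
        mul_pos hnegprod hposrest
    _ = _ := by ring

end Counting


noncomputable def Jmap (k : ℕ) : EuclideanSpace ℂ (Fin k) →ₗ[ℂ] EuclideanSpace ℂ (Fin (k+2)) where
  toFun x := WithLp.toLp 2 (fun a => if h : (a : ℕ) < k then x ⟨a, h⟩ else 0 : Fin (k+2) → ℂ)
  map_add' x y := by
    ext a; by_cases h : (a:ℕ) < k <;> simp [h, PiLp.add_apply]
  map_smul' c x := by
    ext a; by_cases h : (a:ℕ) < k <;> simp [h, PiLp.smul_apply]

theorem Jmap_apply {k : ℕ} (x : EuclideanSpace ℂ (Fin k)) (a : Fin (k+2)) :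
    (⇑(Jmap k x) : Fin (k+2) → ℂ) a = if h : (a : ℕ) < k then x ⟨a, h⟩ else 0 := rfl

theorem Jmap_castAdd {k : ℕ} (x : EuclideanSpace ℂ (Fin k)) (i : Fin k) :
    (⇑(Jmap k x) : Fin (k+2) → ℂ) (Fin.castAdd 2 i) = x i := by
  rw [Jmap_apply, dif_pos (by simpa using i.isLt)]
  rfl

theorem Jmap_natAdd {k : ℕ} (x : EuclideanSpace ℂ (Fin k)) (i : Fin 2) :
    (⇑(Jmap k x) : Fin (k+2) → ℂ) (Fin.natAdd k i) = 0 := by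
  rw [Jmap_apply, dif_neg (by simp)]

theorem Jmap_inj (k : ℕ) : Function.Injective (Jmap k) := by
  intro x y h
  ext i
  have h1 := congrFun (congrArg (fun z : EuclideanSpace ℂ (Fin (k+2)) => (⇑z : Fin (k+2) → ℂ)) h)
    (Fin.castAdd 2 i)
  simp only at h1
  rwa [Jmap_castAdd, Jmap_castAdd] at h1

theorem Jmap_form {k : ℕ} (H : Matrix (Fin (k+2)) (Fin (k+2)) ℂ)
    (hk : k ≤ k + 2) (x : EuclideanSpace ℂ (Fin k)) :
    dotProduct (star ⇑(Jmap k x)) (H *ᵥ ⇑(Jmap k x))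
      = dotProduct (star ⇑x) ((H.submatrix (Fin.castLE hk) (Fin.castLE hk)) *ᵥ ⇑x) := by
  simp only [dotProduct, mulVec, Pi.star_apply, submatrix_apply, dotProduct]
  rw [Fin.sum_univ_add]
  have hz : ∀ i : Fin 2, star ((⇑(Jmap k x) : Fin (k+2) → ℂ) (Fin.natAdd k i)) *
      (∑ b, H (Fin.natAdd k i) b * (⇑(Jmap k x) : Fin (k+2) → ℂ) b) = 0 := by
    intro i; rw [Jmap_natAdd]; simp
  rw [Finset.sum_congr rfl (fun i _ => hz i), Finset.sum_const, smul_zero, add_zero]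
  refine Finset.sum_congr rfl fun a _ => ?_
  rw [Jmap_castAdd]
  congr 1
  rw [Fin.sum_univ_add]
  have hz2 : ∀ i : Fin 2, H (Fin.castAdd 2 a) (Fin.natAdd k i) *
      (⇑(Jmap k x) : Fin (k+2) → ℂ) (Fin.natAdd k i) = 0 := by
    intro i; rw [Jmap_natAdd, mul_zero]
  rw [Finset.sum_congr rfl (fun i _ => hz2 i), Finset.sum_const, smul_zero, add_zero]
  refine Finset.sum_congr rfl fun b _ => ?_
  rw [Jmap_castAdd]
  rfl

theorem parity_lemma {a b : ℝ} {m m' : ℕ} (h1 : 0 < (-1:ℝ)^m * a) (h2 : 0 < (-1:ℝ)^m' * b) :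
    (0 < a * b ↔ Even (m + m')) := by
  have h3 : 0 < ((-1:ℝ)^m * a) * ((-1:ℝ)^m' * b) := mul_pos h1 h2
  have h4 : ((-1:ℝ)^m * a) * ((-1:ℝ)^m' * b) = (-1:ℝ)^(m+m') * (a*b) := by
    rw [pow_add]; ring
  rw [h4] at h3
  rcases Nat.even_or_odd (m + m') with he | ho
  · rw [he.neg_one_pow, one_mul] at h3
    exact ⟨fun _ => he, fun _ => h3⟩
  · rw [ho.neg_one_pow] at h3
    have : a * b < 0 := by linarith
    constructor
    · intro h; linarith
    · intro h; exact absurd h (Nat.not_even_iff_odd.mpr ho)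

end Stmt10Aux

open Stmt10Aux in
/-- Comparing the signature of a nonsingular Hermitian matrix with that of its
principal submatrix of corank 2, in terms of the signs of the determinants. -/
theorem stmt10 (k : ℕ) (H : Matrix (Fin (k + 2)) (Fin (k + 2)) ℂ)
    (hH : H.IsHermitian)
    (H' : Matrix (Fin k) (Fin k) ℂ)
    (hsub : H' = H.submatrix (Fin.castLE (by omega)) (Fin.castLE (by omega)))
    (hdet : H.det ≠ 0) (hdet' : H'.det ≠ 0) :
    H.det.im = 0 ∧ H'.det.im = 0 ∧
    (H.det.re * H'.det.re < 0 → matSig H = matSig H') ∧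
    (0 < H.det.re * H'.det.re →
      matSig H = matSig H' + 2 ∨ matSig H = matSig H' - 2) := by
  classical
  have hk : k ≤ k + 2 := by omega
  have hH' : H'.IsHermitian := by rw [hsub]; exact hH.submatrix _
  have hform : ∀ x : EuclideanSpace ℂ (Fin k),
      dotProduct (star ⇑(Jmap k x)) (H *ᵥ ⇑(Jmap k x))
        = dotProduct (star ⇑x) (H' *ᵥ ⇑x) := by
    intro x
    rw [hsub]
    exact Jmap_form H hk x
  -- first inequality : negC hH' ≤ negC hH
  have hle1 : negC hH' ≤ negC hH := by
    set V' := Vspan hH'.eigenvectorBasis (univ.filter fun i => hH'.eigenvalues i < 0) with hV'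
    have hdimV' : Module.finrank ℂ V' = negC hH' := by
      rw [hV', finrank_Vspan]; rfl
    set W := Submodule.map (Jmap k) V' with hW
    have hdimW : Module.finrank ℂ W = negC hH' := by
      rw [← hdimV']
      exact (Submodule.equivMapOfInjective (Jmap k) (Jmap_inj k) V').finrank_eq.symm
    rw [← hdimW]
    apply negdef_finrank_le hH hdet
    intro x hxW hx0
    obtain ⟨y, hyV', rfl⟩ := hxW
    have hy0 : y ≠ 0 := fun h => hx0 (by rw [h, map_zero])
    rw [hform y]
    exact Vspan_neg_negdef hH' y hyV' hy0
  -- second inequality : negC hH ≤ negC hH' + 2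
  have hle2 : negC hH ≤ negC hH' + 2 := by
    set V := Vspan hH.eigenvectorBasis (univ.filter fun i => hH.eigenvalues i < 0) with hV
    have hdimV : Module.finrank ℂ V = negC hH := by rw [hV, finrank_Vspan]; rfl
    set R := LinearMap.range (Jmap k) with hR
    have hdimR : Module.finrank ℂ R = k := by
      rw [hR, LinearMap.finrank_range_of_inj (Jmap_inj k), finrank_euclideanSpace_fin]
    set W := V ⊓ R with hWdef
    have hsup : Module.finrank ℂ (V ⊔ R : Submodule ℂ _) ≤ k + 2 := by
      have := Submodule.finrank_le (V ⊔ R)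
      rwa [finrank_euclideanSpace_fin] at this
    have hdim : Module.finrank ℂ (V ⊔ R : Submodule ℂ _) + Module.finrank ℂ W
        = Module.finrank ℂ V + Module.finrank ℂ R := by
      rw [hWdef]; exact Submodule.finrank_sup_add_finrank_inf_eq V R
    have hWge : negC hH ≤ Module.finrank ℂ W + 2 := by omega
    set W' := Submodule.comap (Jmap k) W with hW'
    have hmapW' : Submodule.map (Jmap k) W' = W := by
      rw [hW', Submodule.map_comap_eq, ← hR]
      exact inf_eq_right.mpr (by rw [hWdef]; exact inf_le_right)
    have hdimW' : Module.finrank ℂ W' = Module.finrank ℂ W := by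
      rw [← hmapW']
      exact (Submodule.equivMapOfInjective (Jmap k) (Jmap_inj k) W').finrank_eq
    have hW'le : Module.finrank ℂ W' ≤ negC hH' := by
      apply negdef_finrank_le hH' hdet'
      intro y hyW' hy0
      have hJy : Jmap k y ∈ W := hyW'
      have hJy0 : Jmap k y ≠ 0 := fun h => hy0 (Jmap_inj k (by rw [h, map_zero]))
      rw [← hform y]
      exact Vspan_neg_negdef hH (Jmap k y) (hJy.1) hJy0
    omega
  -- counts
  have hpn : posC hH + negC hH = k + 2 := pos_add_neg hH hdet
  have hpn' : posC hH' + negC hH' = k := pos_add_neg hH' hdet'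
  -- signature formulas
  have hsig : matSig H = (posC hH : ℤ) - (negC hH : ℤ) := by
    simp only [matSig]
    rw [dif_pos hH]
    rfl
  have hsig' : matSig H' = (posC hH' : ℤ) - (negC hH' : ℤ) := by
    simp only [matSig]
    rw [dif_pos hH']
    rfl
  obtain ⟨him, hsgn⟩ := det_sign hH hdet
  obtain ⟨him', hsgn'⟩ := det_sign hH' hdet'
  have hpar := parity_lemma hsgn hsgn'
  refine ⟨him, him', ?_, ?_⟩
  · intro hlt
    have hodd : ¬ Even (negC hH + negC hH') := fun he => absurd (hpar.mpr he) (by linarith)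
    have : negC hH = negC hH' + 1 := by
      rcases Nat.even_or_odd (negC hH + negC hH') with he | ho
      · exact absurd he hodd
      · obtain ⟨m, hm⟩ := ho
        omega
    rw [hsig, hsig']
    omega
  · intro hgt
    have heven : Even (negC hH + negC hH') := hpar.mp hgt
    have : negC hH = negC hH' ∨ negC hH = negC hH' + 2 := by
      rcases heven with ⟨m, hm⟩
      omega
    rw [hsig, hsig']
    rcases this with h | h
    · left; omega
    · right; omega
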